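/- Let w = e^{z*} where z*(x) = log((1+|x|²/8)^{-2}). Then ∫_{ℝ²} |∇w|² dx - ∫_{ℝ²} e^{z*} w² dx = -4π/5; in particular the infimum λ₁* of the Rayleigh functional over the L²-unit sphere of H¹(ℝ²) is negative. -/

import Mathlib

open Real MeasureTheory

noncomputable def zstar (x : EuclideanSpace ℝ (Fin 2)) : ℝ :=
  Real.log ((1 + ‖x‖ ^ 2 / 8) ^ (-2 : ℤ))

/-- Values of the Rayleigh functional on the `L²`-unit sphere of `H¹(ℝ²)`. -/
noncomputable def rayleighValues : Set ℝ :=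
  {r : ℝ | ∃ w : EuclideanSpace ℝ (Fin 2) → ℝ, MemLp w 2 volume ∧
    Integrable (fun x => ‖fderiv ℝ w x‖ ^ 2) volume ∧
    (∫ x : EuclideanSpace ℝ (Fin 2), (w x) ^ 2) = 1 ∧
    r = (∫ x : EuclideanSpace ℝ (Fin 2), ‖fderiv ℝ w x‖ ^ 2) -
      ∫ x : EuclideanSpace ℝ (Fin 2), Real.exp (zstar x) * (w x) ^ 2}

lemma exp_zstar (x : EuclideanSpace ℝ (Fin 2)) :
    Real.exp (zstar x) = ((1 + ‖x‖ ^ 2 / 8) ^ 2)⁻¹ := by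
  rw [zstar, Real.exp_log (by positivity), zpow_neg]
  norm_cast

lemma u_one_le (a : ℝ) : (1:ℝ) ≤ 1 + a ^ 2 / 8 := by nlinarith [sq_nonneg a]

lemma hasDerivAt_u (y : ℝ) : HasDerivAt (fun t : ℝ => 1 + t ^ 2 / 8) (y / 4) y := by
  have h := (((hasDerivAt_id y).pow 2).div_const 8).const_add 1
  refine h.congr_deriv ?_
  simp
  ring

lemma hasDerivAt_upow (k : ℕ) (y : ℝ) :
    HasDerivAt (fun t : ℝ => ((1 + t ^ 2 / 8) ^ (k + 1))⁻¹)
      (-((k + 1 : ℝ) * (y / 4)) * ((1 + y ^ 2 / 8) ^ (k + 2))⁻¹) y := by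
  have hq : (0 : ℝ) < 1 + y ^ 2 / 8 := by positivity
  have h1 := ((hasDerivAt_u y).pow (k + 1)).inv (pow_ne_zero _ hq.ne')
  refine h1.congr_deriv ?_
  simp only [Pi.pow_apply, Nat.add_sub_cancel, Nat.cast_add, Nat.cast_one]
  have := hq.ne'
  field_simp
  ring

lemma tendsto_u_inv (k : ℕ) :
    Filter.Tendsto (fun y : ℝ => ((1 + y ^ 2 / 8) ^ (k + 1))⁻¹) Filter.atTop (nhds 0) := by
  apply Filter.Tendsto.inv_tendsto_atTop
  apply (Filter.tendsto_pow_atTop (Nat.succ_ne_zero k)).comp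
  apply Filter.tendsto_atTop_add_const_left
  exact (Filter.tendsto_pow_atTop two_ne_zero).atTop_div_const (by norm_num)

lemma integral_i6 : ∫ y in Set.Ioi (0:ℝ), y * ((1 + y ^ 2 / 8) ^ 6)⁻¹ = 4 / 5 := by
  have h := integral_Ioi_of_hasDerivAt_of_nonneg'
    (g := fun y : ℝ => -(4/5) * ((1 + y ^ 2 / 8) ^ 5)⁻¹)
    (g' := fun y : ℝ => y * ((1 + y ^ 2 / 8) ^ 6)⁻¹) (a := 0) (l := 0)
    (fun y _ => by
      have := (hasDerivAt_upow 4 y).const_mul (-(4/5) : ℝ)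
      refine this.congr_deriv ?_
      norm_num; ring)
    (fun y hy => by
      have : (0:ℝ) < y := hy
      positivity)
    (by simpa using (tendsto_u_inv 4).const_mul (-(4/5) : ℝ))
  simpa using h

lemma integral_i4 : ∫ y in Set.Ioi (0:ℝ), y * ((1 + y ^ 2 / 8) ^ 4)⁻¹ = 4 / 3 := by
  have h := integral_Ioi_of_hasDerivAt_of_nonneg'
    (g := fun y : ℝ => -(4/3) * ((1 + y ^ 2 / 8) ^ 3)⁻¹)
    (g' := fun y : ℝ => y * ((1 + y ^ 2 / 8) ^ 4)⁻¹) (a := 0) (l := 0)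
    (fun y _ => by
      have := (hasDerivAt_upow 2 y).const_mul (-(4/3) : ℝ)
      refine this.congr_deriv ?_
      norm_num; ring)
    (fun y hy => by
      have : (0:ℝ) < y := hy
      positivity)
    (by simpa using (tendsto_u_inv 2).const_mul (-(4/3) : ℝ))
  simpa using h

lemma integral_igrad :
    ∫ y in Set.Ioi (0:ℝ), y * (y ^ 2 / 4 * ((1 + y ^ 2 / 8) ^ 6)⁻¹) = 2 / 5 := by
  have h := integral_Ioi_of_hasDerivAt_of_nonneg'
    (g := fun y : ℝ => -2 * ((1 + y ^ 2 / 8) ^ 4)⁻¹ + (8/5) * ((1 + y ^ 2 / 8) ^ 5)⁻¹)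
    (g' := fun y : ℝ => y * (y ^ 2 / 4 * ((1 + y ^ 2 / 8) ^ 6)⁻¹)) (a := 0) (l := 0)
    (fun y _ => by
      have h1 := ((hasDerivAt_upow 3 y).const_mul (-2 : ℝ)).add
        ((hasDerivAt_upow 4 y).const_mul ((8/5) : ℝ))
      refine h1.congr_deriv ?_
      have hq : (0:ℝ) < 1 + y ^ 2 / 8 := by positivity
      have := hq.ne'
      field_simp
      ring)
    (fun y hy => by
      have : (0:ℝ) < y := hy
      positivity)
    (by
      have := ((tendsto_u_inv 3).const_mul (-2 : ℝ)).add ((tendsto_u_inv 4).const_mul ((8/5) : ℝ))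
      simpa using this)
  rw [h]; norm_num

lemma hasFDerivAt_w (x : EuclideanSpace ℝ (Fin 2)) :
    HasFDerivAt (fun y : EuclideanSpace ℝ (Fin 2) => Real.exp (zstar y))
      ((-(1/2) * ((1 + ‖x‖ ^ 2 / 8) ^ 3)⁻¹) • (innerSL ℝ x)) x := by
  have heq : (fun y : EuclideanSpace ℝ (Fin 2) => Real.exp (zstar y))
      = fun y => ((1 + ‖y‖ ^ 2 / 8) ^ 2)⁻¹ := funext exp_zstar
  rw [heq]
  have hn : HasFDerivAt (fun y : EuclideanSpace ℝ (Fin 2) => ‖y‖ ^ 2)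
      ((2:ℕ) • (innerSL ℝ x)) x := (hasStrictFDerivAt_norm_sq x).hasFDerivAt
  have hq : (0:ℝ) < 1 + ‖x‖ ^ 2 / 8 := by positivity
  have hf : HasDerivAt (fun s : ℝ => ((1 + s / 8) ^ 2)⁻¹)
      (-(1/4) * ((1 + ‖x‖ ^ 2 / 8) ^ 3)⁻¹) (‖x‖ ^ 2) := by
    have hu : HasDerivAt (fun s : ℝ => 1 + s / 8) (1/8) (‖x‖ ^ 2) := by
      simpa using ((hasDerivAt_id (‖x‖^2)).div_const 8).const_add 1
    have h1 := (hu.pow 2).inv (pow_ne_zero _ hq.ne')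
    refine h1.congr_deriv ?_
    simp only [Pi.pow_apply]
    have := hq.ne'
    field_simp
    ring
  have hcomp := hf.comp_hasFDerivAt x hn
  refine hcomp.congr_fderiv ?_
  ext y
  simp [smul_smul]
  ring

lemma fderiv_w_eq (x : EuclideanSpace ℝ (Fin 2)) :
    fderiv ℝ (fun y : EuclideanSpace ℝ (Fin 2) => Real.exp (zstar y)) x
      = (-(1/2) * ((1 + ‖x‖ ^ 2 / 8) ^ 3)⁻¹) • (innerSL ℝ x) := (hasFDerivAt_w x).fderiv

lemma norm_fderiv_sq (x : EuclideanSpace ℝ (Fin 2)) :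
    ‖fderiv ℝ (fun y : EuclideanSpace ℝ (Fin 2) => Real.exp (zstar y)) x‖ ^ 2
      = ‖x‖ ^ 2 / 4 * ((1 + ‖x‖ ^ 2 / 8) ^ 6)⁻¹ := by
  have hq : (0:ℝ) < 1 + ‖x‖ ^ 2 / 8 := by positivity
  rw [fderiv_w_eq, norm_smul, innerSL_apply_norm, Real.norm_eq_abs, abs_mul, abs_neg,
    abs_of_pos (by positivity : (0:ℝ) < ((1 + ‖x‖ ^ 2 / 8) ^ 3)⁻¹),
    abs_of_pos (by norm_num : (0:ℝ) < 1/2)]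
  have := hq.ne'
  field_simp
  ring

lemma vol_ball2 : (volume (Metric.ball (0 : EuclideanSpace ℝ (Fin 2)) 1)).toReal = π := by
  rw [EuclideanSpace.volume_ball]
  simp [Fintype.card_fin]
  rw [show (1:ℝ) + 1 = 2 by norm_num, Real.Gamma_two, sq_sqrt pi_nonneg]
  simp [ENNReal.toReal_ofReal pi_nonneg]

lemma integral_radial (f : ℝ → ℝ) :
    (∫ x : EuclideanSpace ℝ (Fin 2), f ‖x‖) = 2 * (π * ∫ y in Set.Ioi (0:ℝ), y * f y) := by
  rw [MeasureTheory.integral_fun_norm_addHaar volume f]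
  rw [finrank_euclideanSpace_fin, Measure.real, vol_ball2]
  simp only [pow_one, smul_eq_mul, nsmul_eq_mul]
  norm_num

lemma integral_grad2 :
    (∫ x : EuclideanSpace ℝ (Fin 2),
      ‖fderiv ℝ (fun y => Real.exp (zstar y)) x‖ ^ 2) = 4 * π / 5 := by
  have h : (fun x : EuclideanSpace ℝ (Fin 2) =>
      ‖fderiv ℝ (fun y => Real.exp (zstar y)) x‖ ^ 2)
      = fun x => (fun r : ℝ => r ^ 2 / 4 * ((1 + r ^ 2 / 8) ^ 6)⁻¹) ‖x‖ :=
    funext norm_fderiv_sq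
  have h2 := integral_radial (fun r : ℝ => r ^ 2 / 4 * ((1 + r ^ 2 / 8) ^ 6)⁻¹)
  rw [h, h2, integral_igrad]
  ring

lemma cube_eq (x : EuclideanSpace ℝ (Fin 2)) :
    Real.exp (zstar x) * (Real.exp (zstar x)) ^ 2 = ((1 + ‖x‖ ^ 2 / 8) ^ 6)⁻¹ := by
  have hq : (0:ℝ) < 1 + ‖x‖ ^ 2 / 8 := by positivity
  rw [exp_zstar]
  have := hq.ne'
  field_simp

lemma integral_cube2 :
    (∫ x : EuclideanSpace ℝ (Fin 2),
      Real.exp (zstar x) * (Real.exp (zstar x)) ^ 2) = 8 * π / 5 := by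
  have h : (fun x : EuclideanSpace ℝ (Fin 2) =>
      Real.exp (zstar x) * (Real.exp (zstar x)) ^ 2)
      = fun x => (fun r : ℝ => ((1 + r ^ 2 / 8) ^ 6)⁻¹) ‖x‖ := funext cube_eq
  have h2 := integral_radial (fun r : ℝ => ((1 + r ^ 2 / 8) ^ 6)⁻¹)
  rw [h, h2, integral_i6]
  ring

lemma sq_eq (x : EuclideanSpace ℝ (Fin 2)) :
    (Real.exp (zstar x)) ^ 2 = ((1 + ‖x‖ ^ 2 / 8) ^ 4)⁻¹ := by
  have hq : (0:ℝ) < 1 + ‖x‖ ^ 2 / 8 := by positivity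
  rw [exp_zstar]
  have := hq.ne'
  field_simp

lemma integral_sq2 :
    (∫ x : EuclideanSpace ℝ (Fin 2), (Real.exp (zstar x)) ^ 2) = 8 * π / 3 := by
  have h : (fun x : EuclideanSpace ℝ (Fin 2) => (Real.exp (zstar x)) ^ 2)
      = fun x => (fun r : ℝ => ((1 + r ^ 2 / 8) ^ 4)⁻¹) ‖x‖ := funext sq_eq
  have h2 := integral_radial (fun r : ℝ => ((1 + r ^ 2 / 8) ^ 4)⁻¹)
  rw [h, h2, integral_i4]
  ring

lemma integrable_of_bound {g : EuclideanSpace ℝ (Fin 2) → ℝ} (hg : Continuous g) (C : ℝ)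
    (hb : ∀ x, ‖g x‖ ≤ C * ((1 + ‖x‖) ^ 3)⁻¹) : Integrable g volume := by
  have h3 : ((Module.finrank ℝ (EuclideanSpace ℝ (Fin 2)) : ℝ)) < 3 := by
    rw [finrank_euclideanSpace_fin]; norm_num
  have hi := (integrable_one_add_norm (E := EuclideanSpace ℝ (Fin 2)) (μ := volume) h3).const_mul C
  apply hi.mono' hg.aestronglyMeasurable
  refine Filter.Eventually.of_forall fun x => ?_
  have hr : (1 + ‖x‖ : ℝ) ^ (-(3:ℝ)) = ((1 + ‖x‖) ^ 3)⁻¹ := by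
    rw [← Real.rpow_natCast (1 + ‖x‖) 3, ← Real.rpow_neg (by positivity)]
    norm_num
  rw [hr]
  exact hb x

lemma key_ineq (a : ℝ) (ha : 0 ≤ a) : (1 + a) ^ 3 ≤ 256 * (1 + a ^ 2 / 8) ^ 2 := by
  nlinarith [sq_nonneg (a - 1), sq_nonneg a, sq_nonneg (a ^ 2 - 1), pow_nonneg ha 3,
    sq_nonneg (a - 2)]

lemma cont_u_inv (k : ℕ) :
    Continuous fun x : EuclideanSpace ℝ (Fin 2) => ((1 + ‖x‖ ^ 2 / 8) ^ k)⁻¹ := by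
  apply Continuous.inv₀
  · fun_prop
  · intro x
    have := u_one_le ‖x‖
    positivity

lemma integrable_upow (k : ℕ) (hk : 2 ≤ k) :
    Integrable (fun x : EuclideanSpace ℝ (Fin 2) => ((1 + ‖x‖ ^ 2 / 8) ^ k)⁻¹) volume := by
  apply integrable_of_bound (cont_u_inv k) 256
  intro x
  set a := ‖x‖ with ha
  have ha0 : 0 ≤ a := norm_nonneg x
  have hu1 : (1:ℝ) ≤ 1 + a ^ 2 / 8 := u_one_le a
  have hupos : (0:ℝ) < 1 + a ^ 2 / 8 := by linarith
  rw [Real.norm_eq_abs, abs_of_pos (by positivity)]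
  rw [inv_eq_one_div, inv_eq_one_div, mul_one_div, div_le_div_iff₀ (by positivity) (by positivity)]
  have h1 : (1 + a ^ 2 / 8) ^ 2 ≤ (1 + a ^ 2 / 8) ^ k := pow_le_pow_right₀ hu1 hk
  nlinarith [key_ineq a ha0, pow_pos hupos k]

lemma integrable_grad2 :
    Integrable (fun x : EuclideanSpace ℝ (Fin 2) =>
      ‖fderiv ℝ (fun y => Real.exp (zstar y)) x‖ ^ 2) volume := by
  have h : (fun x : EuclideanSpace ℝ (Fin 2) =>
      ‖fderiv ℝ (fun y => Real.exp (zstar y)) x‖ ^ 2)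
      = fun x => ‖x‖ ^ 2 / 4 * ((1 + ‖x‖ ^ 2 / 8) ^ 6)⁻¹ := funext norm_fderiv_sq
  rw [h]
  apply integrable_of_bound ?_ 512
  · intro x
    set a := ‖x‖ with ha
    have ha0 : 0 ≤ a := norm_nonneg x
    have hu1 : (1:ℝ) ≤ 1 + a ^ 2 / 8 := u_one_le a
    have hupos : (0:ℝ) < 1 + a ^ 2 / 8 := by linarith
    rw [Real.norm_eq_abs, abs_of_nonneg (by positivity)]
    rw [show a ^ 2 / 4 * ((1 + a ^ 2 / 8) ^ 6)⁻¹ = (a ^ 2 / 4) / (1 + a ^ 2 / 8) ^ 6 from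
        (div_eq_mul_inv _ _).symm,
      show (512:ℝ) * ((1 + a) ^ 3)⁻¹ = 512 / (1 + a) ^ 3 from (div_eq_mul_inv _ _).symm,
      div_le_div_iff₀ (by positivity) (by positivity)]
    have h2 : a ^ 2 / 4 ≤ 2 * (1 + a ^ 2 / 8) := by nlinarith
    have h3 := key_ineq a ha0
    have h4 : a ^ 2 / 4 * (1 + a) ^ 3 ≤ (2 * (1 + a ^ 2 / 8)) * (256 * (1 + a ^ 2 / 8) ^ 2) :=
      mul_le_mul h2 h3 (by positivity) (by positivity)
    have h5 : (2 * (1 + a ^ 2 / 8)) * (256 * (1 + a ^ 2 / 8) ^ 2) = 512 * (1 + a ^ 2 / 8) ^ 3 := by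
      ring
    have h6 : (1 + a ^ 2 / 8) ^ 3 ≤ (1 + a ^ 2 / 8) ^ 6 := pow_le_pow_right₀ hu1 (by norm_num)
    linarith
  · have := cont_u_inv 6
    fun_prop

lemma cont_exp_zstar : Continuous fun x : EuclideanSpace ℝ (Fin 2) => Real.exp (zstar x) := by
  have h : (fun x : EuclideanSpace ℝ (Fin 2) => Real.exp (zstar x))
      = fun x => ((1 + ‖x‖ ^ 2 / 8) ^ 2)⁻¹ := funext exp_zstar
  rw [h]
  apply Continuous.inv₀
  · fun_prop
  · intro x
    have := u_one_le ‖x‖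
    positivity

lemma exp_zstar_le_one (x : EuclideanSpace ℝ (Fin 2)) : Real.exp (zstar x) ≤ 1 := by
  rw [exp_zstar]
  have h := u_one_le ‖x‖
  have h2 : (1:ℝ) ≤ (1 + ‖x‖ ^ 2 / 8) ^ 2 := by nlinarith
  exact inv_le_one_of_one_le₀ h2

lemma bddBelow_rayleigh : BddBelow rayleighValues := by
  refine ⟨-1, ?_⟩
  rintro r ⟨w, hw2, hgrad, hnorm, rfl⟩
  have hw2i : Integrable (fun x => (w x) ^ 2) volume :=
    (memLp_two_iff_integrable_sq hw2.aestronglyMeasurable).mp hw2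
  have hzw : Integrable (fun x => Real.exp (zstar x) * (w x) ^ 2) volume := by
    apply hw2i.mono' (cont_exp_zstar.aestronglyMeasurable.mul
      (hw2.aestronglyMeasurable.pow 2))
    refine Filter.Eventually.of_forall fun x => ?_
    simp only [Pi.mul_apply, Pi.pow_apply, Real.norm_eq_abs]
    rw [abs_of_nonneg (mul_nonneg (Real.exp_pos _).le (sq_nonneg _))]
    calc Real.exp (zstar x) * (w x) ^ 2 ≤ 1 * (w x) ^ 2 :=
          mul_le_mul_of_nonneg_right (exp_zstar_le_one x) (sq_nonneg _)
      _ = (w x) ^ 2 := one_mul _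
  have h1 : (∫ x : EuclideanSpace ℝ (Fin 2), Real.exp (zstar x) * (w x) ^ 2) ≤
      ∫ x : EuclideanSpace ℝ (Fin 2), (w x) ^ 2 := by
    apply integral_mono hzw hw2i
    intro x
    calc Real.exp (zstar x) * (w x) ^ 2 ≤ 1 * (w x) ^ 2 :=
          mul_le_mul_of_nonneg_right (exp_zstar_le_one x) (sq_nonneg _)
      _ = (w x) ^ 2 := one_mul _
  have h2 : (0:ℝ) ≤ ∫ x : EuclideanSpace ℝ (Fin 2), ‖fderiv ℝ w x‖ ^ 2 :=
    integral_nonneg fun x => sq_nonneg _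
  rw [hnorm] at h1
  linarith

lemma mem_rayleigh : (-3/10 : ℝ) ∈ rayleighValues := by
  set c : ℝ := Real.sqrt (3 / (8 * π)) with hc
  have hπ : (0:ℝ) < π := pi_pos
  have hc2 : c ^ 2 = 3 / (8 * π) := Real.sq_sqrt (by positivity)
  refine ⟨fun x => c * Real.exp (zstar x), ?_, ?_, ?_, ?_⟩
  · have hcont : Continuous fun x : EuclideanSpace ℝ (Fin 2) => c * Real.exp (zstar x) :=
      continuous_const.mul cont_exp_zstar
    refine (memLp_two_iff_integrable_sq hcont.aestronglyMeasurable).mpr ?_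
    have h : (fun x : EuclideanSpace ℝ (Fin 2) => (c * Real.exp (zstar x)) ^ 2)
        = fun x => c ^ 2 * ((1 + ‖x‖ ^ 2 / 8) ^ 4)⁻¹ := by
      funext x; rw [mul_pow, sq_eq]
    rw [h]
    exact (integrable_upow 4 (by norm_num)).const_mul _
  · have hfd : ∀ x, fderiv ℝ (fun y => c * Real.exp (zstar y)) x
        = c • fderiv ℝ (fun y => Real.exp (zstar y)) x := by
      intro x
      rw [((hasFDerivAt_w x).const_mul c).fderiv, (hasFDerivAt_w x).fderiv]
    have h : (fun x : EuclideanSpace ℝ (Fin 2) =>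
        ‖fderiv ℝ (fun y => c * Real.exp (zstar y)) x‖ ^ 2)
        = fun x => c ^ 2 * ‖fderiv ℝ (fun y => Real.exp (zstar y)) x‖ ^ 2 := by
      funext x
      rw [hfd x, norm_smul, Real.norm_eq_abs, mul_pow, sq_abs]
    rw [h]
    exact integrable_grad2.const_mul _
  · have h : (fun x : EuclideanSpace ℝ (Fin 2) => (c * Real.exp (zstar x)) ^ 2)
        = fun x => c ^ 2 * (Real.exp (zstar x)) ^ 2 := by
      funext x; rw [mul_pow]
    rw [h, integral_const_mul _ _, integral_sq2, hc2]
    field_simp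
  · have hfd : ∀ x, fderiv ℝ (fun y => c * Real.exp (zstar y)) x
        = c • fderiv ℝ (fun y => Real.exp (zstar y)) x := by
      intro x
      rw [((hasFDerivAt_w x).const_mul c).fderiv, (hasFDerivAt_w x).fderiv]
    have h1 : (fun x : EuclideanSpace ℝ (Fin 2) =>
        ‖fderiv ℝ (fun y => c * Real.exp (zstar y)) x‖ ^ 2)
        = fun x => c ^ 2 * ‖fderiv ℝ (fun y => Real.exp (zstar y)) x‖ ^ 2 := by
      funext x
      rw [hfd x, norm_smul, Real.norm_eq_abs, mul_pow, sq_abs]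
    have h2 : (fun x : EuclideanSpace ℝ (Fin 2) =>
        Real.exp (zstar x) * (c * Real.exp (zstar x)) ^ 2)
        = fun x => c ^ 2 * (Real.exp (zstar x) * (Real.exp (zstar x)) ^ 2) := by
      funext x; ring
    rw [h1, h2, integral_const_mul _ _, integral_const_mul _ _, integral_grad2, integral_cube2, hc2]
    field_simp
    ring

theorem rayleigh_of_exp_zstar_and_lambda_neg :
    ((∫ x : EuclideanSpace ℝ (Fin 2), ‖fderiv ℝ (fun y => Real.exp (zstar y)) x‖ ^ 2) -
      ∫ x : EuclideanSpace ℝ (Fin 2), Real.exp (zstar x) * (Real.exp (zstar x)) ^ 2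
        = -(4 * π / 5)) ∧
    sInf rayleighValues < 0 := by
  constructor
  · rw [integral_grad2, integral_cube2]
    ring
  · have h := csInf_le bddBelow_rayleigh mem_rayleigh
    have : (-3/10 : ℝ) < 0 := by norm_num
    linarith
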